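/- Let H be a complex Hilbert space and M a von Neumann algebra on H of type II₁, and let ρ and ρ̃ be two faithful normal tracial states on M. Then M has Property Γ with respect to ρ if and only if M has Property Γ with respect to ρ̃. -/

import Mathlib

set_option maxHeartbeats 1000000
set_option synthInstance.maxHeartbeats 400000

open scoped ComplexOrder
open Filter Topology

noncomputable section

namespace Paper

variable {H : Type*} [NormedAddCommGroup H] [InnerProductSpace ℂ H] [CompleteSpace H]

/-- Convergence in the weak operator topology along a filter. -/
def WOTConv {E : Type*} [NormedAddCommGroup E] [InnerProductSpace ℂ E] {ι : Type*}
    (l : Filter ι) (T : ι → E →L[ℂ] E) (S : E →L[ℂ] E) : Prop :=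
  ∀ x y : E, Tendsto (fun t => (inner ℂ (T t x) y : ℂ)) l (𝓝 (inner ℂ (S x) y))

/-- `p` is a (self-adjoint idempotent) projection. -/
def IsProjection (p : H →L[ℂ] H) : Prop := star p = p ∧ p * p = p

/-- Two projections are (Murray-von Neumann) equivalent in `S`. -/
def EquivProj (S : Set (H →L[ℂ] H)) (p q : H →L[ℂ] H) : Prop :=
  ∃ v ∈ S, star v * v = p ∧ v * star v = q

/-- `ρ` is a faithful normal tracial state on (the von Neumann algebra whose underlying
set is) `S`. -/
structure IsFNTState (S : Set (H →L[ℂ] H)) (ρ : (H →L[ℂ] H) →ₗ[ℂ] ℂ) : Prop where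
  map_one : ρ 1 = 1
  nonneg : ∀ a ∈ S, 0 ≤ ρ (star a * a)
  tracial : ∀ a ∈ S, ∀ b ∈ S, ρ (a * b) = ρ (b * a)
  faithful : ∀ a ∈ S, ρ (star a * a) = 0 → a = 0
  normal : ∀ {ι : Type} (l : Filter ι) (T : ι → H →L[ℂ] H) (T' : H →L[ℂ] H),
    (∀ t, T t ∈ S) → (∀ t, ‖T t‖ ≤ 1) → T' ∈ S → ‖T'‖ ≤ 1 →
    WOTConv l T T' → Tendsto (fun t => ρ (T t)) l (𝓝 (ρ T'))

/-- The 2-norm `‖a‖₂ = √ρ(a*a)` associated to a state `ρ`. -/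
def norm2 (ρ : (H →L[ℂ] H) →ₗ[ℂ] ℂ) (a : H →L[ℂ] H) : ℝ :=
  Real.sqrt (ρ (star a * a)).re

/-- `M` is a von Neumann algebra of type II₁: it admits a faithful normal tracial state and
contains no nonzero projection `p` with `pMp` commutative. -/
def IsTypeII1 (M : VonNeumannAlgebra H) : Prop :=
  (∃ ρ : (H →L[ℂ] H) →ₗ[ℂ] ℂ, IsFNTState (M : Set (H →L[ℂ] H)) ρ) ∧
  ∀ p ∈ M, IsProjection p → p ≠ 0 →
    ¬ (∀ x ∈ M, ∀ y ∈ M, p * x * p * (p * y * p) = p * y * p * (p * x * p))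

/-- Property Γ (the ε–2-norm version) for the von Neumann algebra with underlying set `S`,
with respect to the faithful normal tracial state `ρ`. -/
def PropertyGammaOn (S : Set (H →L[ℂ] H)) (ρ : (H →L[ℂ] H) →ₗ[ℂ] ℂ) : Prop :=
  ∀ ε : ℝ, 0 < ε → ∀ n : ℕ, 0 < n → ∀ (k : ℕ) (a : Fin k → H →L[ℂ] H), (∀ j, a j ∈ S) →
    ∃ p : Fin n → H →L[ℂ] H,
      (∀ i, p i ∈ S ∧ IsProjection (p i)) ∧
      (∀ i j, i ≠ j → p i * p j = 0) ∧
      (∀ i j, EquivProj S (p i) (p j)) ∧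
      (∑ i, p i) = 1 ∧
      ∀ i j, norm2 ρ (p i * a j - a j * p i) < ε

/-- Property Γ̂ : the net/weak-operator-topology version of Property Γ. -/
def PropertyGammaHat (M : VonNeumannAlgebra H) : Prop :=
  ∀ (k : ℕ) (a : Fin k → H →L[ℂ] H), (∀ j, a j ∈ M) → ∀ n : ℕ, 0 < n →
    ∃ (Λ : Type) (_ : Preorder Λ), Nonempty Λ ∧ IsDirected Λ (· ≤ ·) ∧
      ∃ p : Fin n → Λ → H →L[ℂ] H,
        (∀ i lam, p i lam ∈ M ∧ IsProjection (p i lam)) ∧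
        (∀ lam, ∀ i j, i ≠ j → p i lam * p j lam = 0) ∧
        (∀ lam i j, EquivProj (M : Set (H →L[ℂ] H)) (p i lam) (p j lam)) ∧
        (∀ lam, (∑ i, p i lam) = 1) ∧
        ∀ i j, WOTConv atTop
          (fun lam => star (p i lam * a j - a j * p i lam) * (p i lam * a j - a j * p i lam))
          (0 : H →L[ℂ] H)

/-- `R` is a hyperfinite type II₁ subfactor of `M`. -/
structure IsHyperfiniteII1Subfactor (M R : VonNeumannAlgebra H) : Prop where
  subset : (R : Set (H →L[ℂ] H)) ⊆ (M : Set (H →L[ℂ] H))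
  infiniteDimensional : ¬ ∃ (d : ℕ) (f : Fin d → H →L[ℂ] H),
    ∀ x ∈ R, x ∈ Submodule.span ℂ (Set.range f)
  factor : ∀ x ∈ R, (∀ y ∈ R, x * y = y * x) → ∃ c : ℂ, x = c • (1 : H →L[ℂ] H)
  hyperfinite : ∃ A : ℕ → StarSubalgebra ℂ (H →L[ℂ] H),
    Monotone A ∧
    (∀ n, (A n : Set (H →L[ℂ] H)) ⊆ (R : Set (H →L[ℂ] H))) ∧
    (∀ n, ∃ (d : ℕ) (f : Fin d → H →L[ℂ] H),
      ∀ x ∈ A n, x ∈ Submodule.span ℂ (Set.range f)) ∧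
    ∀ x ∈ R, ∀ ε : ℝ, 0 < ε → ∀ (m : ℕ) (v : Fin m → H),
      ∃ y : H →L[ℂ] H, (∃ n, y ∈ A n) ∧ ∀ i, ‖(y - x) (v i)‖ < ε

/-- Membership of all matrix entries in a set. -/
def MatMem {n : ℕ} (S : Set (H →L[ℂ] H)) (A : Matrix (Fin n) (Fin n) (H →L[ℂ] H)) : Prop :=
  ∀ i j, A i j ∈ S

/-- The identification `Θ` of an `n × n` matrix of operators on `H` with an operator on the
`ℓ²`-direct sum `H⁽ⁿ⁾` of `n` copies of `H`. -/
def Theta (n : ℕ) (T : Matrix (Fin n) (Fin n) (H →L[ℂ] H)) :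
    PiLp 2 (fun _ : Fin n => H) →L[ℂ] PiLp 2 (fun _ : Fin n => H) :=
  ((PiLp.continuousLinearEquiv 2 ℂ (fun _ : Fin n => H)).symm.toContinuousLinearMap).comp
    (ContinuousLinearMap.pi
      (fun i => ∑ j, (T i j).comp
        ((ContinuousLinearMap.proj (R := ℂ) (φ := fun _ : Fin n => H) j).comp
          (PiLp.continuousLinearEquiv 2 ℂ (fun _ : Fin n => H)).toContinuousLinearMap)))

instance piLpComplete (n : ℕ) : CompleteSpace (PiLp 2 (fun _ : Fin n => H)) :=
  inferInstance

/-- `τ` is the center-valued trace on `M_n(M)`. -/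
structure IsCenterValuedTrace (M : VonNeumannAlgebra H) (n : ℕ)
    (τ : Matrix (Fin n) (Fin n) (H →L[ℂ] H) → Matrix (Fin n) (Fin n) (H →L[ℂ] H)) :
    Prop where
  map_add : ∀ A B, MatMem (M : Set (H →L[ℂ] H)) A → MatMem (M : Set (H →L[ℂ] H)) B →
    τ (A + B) = τ A + τ B
  map_smul : ∀ (c : ℂ) A, MatMem (M : Set (H →L[ℂ] H)) A → τ (c • A) = c • τ A
  mem : ∀ A, MatMem (M : Set (H →L[ℂ] H)) A → MatMem (M : Set (H →L[ℂ] H)) (τ A)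
  central : ∀ A, MatMem (M : Set (H →L[ℂ] H)) A → ∀ B, MatMem (M : Set (H →L[ℂ] H)) B →
    τ A * B = B * τ A
  tracial : ∀ A B, MatMem (M : Set (H →L[ℂ] H)) A → MatMem (M : Set (H →L[ℂ] H)) B →
    τ (A * B) = τ (B * A)
  fix_central : ∀ Z, MatMem (M : Set (H →L[ℂ] H)) Z →
    (∀ B, MatMem (M : Set (H →L[ℂ] H)) B → Z * B = B * Z) → τ Z = Z
  positive : ∀ A, MatMem (M : Set (H →L[ℂ] H)) A → (Theta n (τ (star A * A))).IsPositive
  normal : ∀ {ι : Type} (l : Filter ι) (T : ι → Matrix (Fin n) (Fin n) (H →L[ℂ] H)) (T'),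
    (∀ t, MatMem (M : Set (H →L[ℂ] H)) (T t)) → (∀ t, ‖Theta n (T t)‖ ≤ 1) →
    MatMem (M : Set (H →L[ℂ] H)) T' → ‖Theta n T'‖ ≤ 1 →
    WOTConv l (fun t => Theta n (T t)) (Theta n T') →
    WOTConv l (fun t => Theta n (τ (T t))) (Theta n (τ T'))

/-- The quantity `γ_n(A) = (‖A‖² + n‖τ_n(A*A)‖)^{1/2}`. -/
def gammaN (n : ℕ)
    (τ : Matrix (Fin n) (Fin n) (H →L[ℂ] H) → Matrix (Fin n) (Fin n) (H →L[ℂ] H))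
    (A : Matrix (Fin n) (Fin n) (H →L[ℂ] H)) : ℝ :=
  Real.sqrt (‖Theta n A‖ ^ 2 + n * ‖Theta n (τ (star A * A))‖)

/-- The `n`-fold amplification `φ⁽ⁿ⁾` of a `k`-linear map `φ`, defined entrywise by
`(φ⁽ⁿ⁾(A₁,…,A_k))_{ij} = Σ_{j₁,…,j_{k−1}} φ((A₁)_{i j₁}, (A₂)_{j₁ j₂}, …, (A_k)_{j_{k−1} j})`. -/
def ampl {k n : ℕ} (φ : (Fin k → (H →L[ℂ] H)) → (H →L[ℂ] H))
    (A : Fin k → Matrix (Fin n) (Fin n) (H →L[ℂ] H)) : Matrix (Fin n) (Fin n) (H →L[ℂ] H) :=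
  fun i j => ∑ f : Fin (k + 1) → Fin n,
    if f 0 = i ∧ f (Fin.last k) = j then φ (fun l => A l (f l.castSucc) (f l.succ)) else 0

/-- `φ` is `R`-multimodular (on tuples from `Mset`). -/
def Multimodular {k : ℕ} (Rset Mset : Set (H →L[ℂ] H))
    (φ : (Fin (k + 1) → H →L[ℂ] H) → H →L[ℂ] H) : Prop :=
  ∀ s ∈ Rset, ∀ a : Fin (k + 1) → H →L[ℂ] H, (∀ i, a i ∈ Mset) →
    s * φ a = φ (Function.update a 0 (s * a 0)) ∧
    φ a * s = φ (Function.update a (Fin.last k) (a (Fin.last k) * s)) ∧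
    ∀ i : Fin k, φ (Function.update a i.castSucc (a i.castSucc * s))
      = φ (Function.update a i.succ (s * a i.succ))

/-- `φ` is separately normal: fixing all variables but one, bounded weak-operator
convergent nets are sent to weak-operator convergent nets. -/
def SepNormal {k : ℕ} (Mset : Set (H →L[ℂ] H))
    (φ : (Fin k → H →L[ℂ] H) → H →L[ℂ] H) : Prop :=
  ∀ (i : Fin k) (a : Fin k → H →L[ℂ] H), (∀ j, a j ∈ Mset) →
    ∀ {ι : Type} (l : Filter ι) (b : ι → H →L[ℂ] H) (b' : H →L[ℂ] H) (C : ℝ),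
      (∀ t, b t ∈ Mset) → (∀ t, ‖b t‖ ≤ C) → b' ∈ Mset →
      WOTConv l b b' →
      WOTConv l (fun t => φ (Function.update a i (b t))) (φ (Function.update a i b'))

/-- The map `φ_{σ,p}`: the variables in `σ` are replaced by commutators with `p`. -/
def phiSigma {k : ℕ} (φ : (Fin k → H →L[ℂ] H) → H →L[ℂ] H) (p : H →L[ℂ] H)
    (σ : Finset (Fin k)) (a : Fin k → H →L[ℂ] H) : H →L[ℂ] H :=
  φ (fun i => if i ∈ σ then p * a i - a i * p else a i)

/-- The map `φ_{σ,p,i}` (for `i ≤ l(σ)`, the least element of `σ`). -/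
def phiSigmaI {k : ℕ} (φ : (Fin k → H →L[ℂ] H) → H →L[ℂ] H) (p : H →L[ℂ] H)
    (σ : Finset (Fin k)) (hσ : σ.Nonempty) (i : Fin k) (a : Fin k → H →L[ℂ] H) :
    H →L[ℂ] H :=
  φ (fun j =>
    if j = i then
      (if i = σ.min' hσ then p * (p * a i - a i * p) else p * a i - a i * p)
    else if j ∈ σ then p * a j - a j * p else a j)

/-- The Hochschild coboundary operator `∂`. -/
def cobound {k : ℕ} (φ : (Fin k → H →L[ℂ] H) → H →L[ℂ] H)
    (a : Fin (k + 1) → H →L[ℂ] H) : H →L[ℂ] H :=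
  a 0 * φ (fun i => a i.succ)
    + (∑ i : Fin k, (-1 : ℂ) ^ ((i : ℕ) + 1) •
        φ (fun j => if (j : ℕ) < (i : ℕ) then a j.castSucc
            else if j = i then a i.castSucc * a i.succ else a j.succ))
    + (-1 : ℂ) ^ (k + 1) • (φ (fun i => a i.castSucc) * a (Fin.last k))

lemma isClosed_centralizer' (s : Set (H →L[ℂ] H)) : IsClosed (Set.centralizer s) := by
  have h : Set.centralizer s = ⋂ z ∈ s, {x : H →L[ℂ] H | z * x = x * z} := by
    ext x
    simp [Set.mem_centralizer_iff]
  rw [h]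
  exact isClosed_biInter fun z _ =>
    isClosed_eq (continuous_const.mul continuous_id) (continuous_id.mul continuous_const)

lemma vnClosed (M : VonNeumannAlgebra H) : IsClosed (M : Set (H →L[ℂ] H)) := by
  rw [← M.centralizer_centralizer]
  exact isClosed_centralizer' _

lemma proj_norm_le_one' {p : H →L[ℂ] H} (h1 : star p = p) (h2 : p * p = p) : ‖p‖ ≤ 1 := by
  have h : ‖p‖ * ‖p‖ = ‖p‖ := by
    rw [← CStarRing.norm_star_mul_self (x := p), h1, h2]
  nlinarith [norm_nonneg p]

lemma exists_wot_ulim {ι : Type} (U : Ultrafilter ι) (M : VonNeumannAlgebra H)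
    (T : ι → H →L[ℂ] H) (C : ℝ) (hTnorm : ∀ t, ‖T t‖ ≤ C)
    (hTmem : ∀ t, T t ∈ M) :
    ∃ S : H →L[ℂ] H, S ∈ M ∧ ‖S‖ ≤ C ∧ WOTConv (↑U) T S := by
  have hne : Nonempty ι := Filter.nonempty_of_neBot (↑U)
  have hCnn : 0 ≤ C := le_trans (norm_nonneg _) (hTnorm (Classical.arbitrary ι))
  have hptbd : ∀ (x y : H) (t : ι), ‖(inner ℂ (T t x) y : ℂ)‖ ≤ C * ‖x‖ * ‖y‖ := by
    intro x y t
    have h1 : ‖T t x‖ ≤ C * ‖x‖ :=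
      le_trans ((T t).le_opNorm x) (mul_le_mul_of_nonneg_right (hTnorm t) (norm_nonneg x))
    calc ‖(inner ℂ (T t x) y : ℂ)‖ ≤ ‖T t x‖ * ‖y‖ := norm_inner_le_norm _ _
      _ ≤ C * ‖x‖ * ‖y‖ := mul_le_mul_of_nonneg_right h1 (norm_nonneg y)
  have hex : ∀ x y : H, ∃ c : ℂ, Tendsto (fun t => (inner ℂ (T t x) y : ℂ)) (↑U) (𝓝 c) := by
    intro x y
    obtain ⟨c, -, hc⟩ := (isCompact_closedBall (0:ℂ) (C * ‖x‖ * ‖y‖)).ultrafilter_le_nhds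
      (U.map fun t => (inner ℂ (T t x) y : ℂ))
      (by
        rw [Ultrafilter.coe_map]
        refine Filter.le_principal_iff.mpr (Filter.mem_map.mpr ?_)
        refine Filter.univ_mem' fun t => ?_
        simpa [Metric.mem_closedBall, dist_zero_right] using hptbd x y t)
    rw [Ultrafilter.coe_map] at hc
    exact ⟨c, hc⟩
  choose φ hφ using hex
  have hbd : ∀ x y, ‖φ x y‖ ≤ C * ‖x‖ * ‖y‖ := by
    intro x y
    have hmem := Metric.isClosed_closedBall.mem_of_tendsto (hφ x y)
      (Filter.Eventually.of_forall fun t => by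
        rw [Metric.mem_closedBall, dist_zero_right]; exact hptbd x y t)
    simpa [Metric.mem_closedBall, dist_zero_right] using hmem
  have haddy : ∀ x y y', φ x (y + y') = φ x y + φ x y' := by
    intro x y y'
    refine tendsto_nhds_unique (hφ x (y + y')) ?_
    have h := (hφ x y).add (hφ x y')
    simpa [inner_add_right] using h
  have hsmuly : ∀ (x : H) (c : ℂ) (y : H), φ x (c • y) = c * φ x y := by
    intro x c y
    refine tendsto_nhds_unique (hφ x (c • y)) ?_
    have h := (hφ x y).const_mul c
    simpa [inner_smul_right] using h
  let g : H → H →L[ℂ] ℂ := fun x => LinearMap.mkContinuous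
    { toFun := φ x
      map_add' := haddy x
      map_smul' := fun c y => by simpa using hsmuly x c y }
    (C * ‖x‖) (fun y => hbd x y)
  have hg : ∀ x, ‖g x‖ ≤ C * ‖x‖ := fun x =>
    LinearMap.mkContinuous_norm_le _ (by positivity) _
  let S0 : H → H := fun x => (InnerProductSpace.toDual ℂ H).symm (g x)
  have hS0 : ∀ x y, (inner ℂ (S0 x) y : ℂ) = φ x y := fun x y =>
    InnerProductSpace.toDual_symm_apply
  have hSadd : ∀ x x', S0 (x + x') = S0 x + S0 x' := by
    intro x x'
    apply ext_inner_right ℂ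
    intro y
    rw [inner_add_left, hS0, hS0, hS0]
    refine tendsto_nhds_unique (hφ (x + x') y) ?_
    have h := (hφ x y).add (hφ x' y)
    simpa [inner_add_left] using h
  have hSsmul : ∀ (c : ℂ) (x : H), S0 (c • x) = c • S0 x := by
    intro c x
    apply ext_inner_right ℂ
    intro y
    rw [inner_smul_left, hS0, hS0]
    refine tendsto_nhds_unique (hφ (c • x) y) ?_
    have h := (hφ x y).const_mul (starRingEnd ℂ c)
    simpa [inner_smul_left, mul_comm] using h
  let S : H →L[ℂ] H := LinearMap.mkContinuous
    { toFun := S0, map_add' := hSadd, map_smul' := fun c x => by simpa using hSsmul c x } C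
    (fun x => by
      show ‖S0 x‖ ≤ C * ‖x‖
      have h : ‖S0 x‖ = ‖g x‖ := LinearIsometryEquiv.norm_map _ _
      rw [h]; exact hg x)
  have hSapp : ∀ x y, (inner ℂ (S x) y : ℂ) = φ x y := fun x y => hS0 x y
  have hWOT : WOTConv (↑U) T S := by
    intro x y
    rw [hSapp]
    exact hφ x y
  have hSnorm : ‖S‖ ≤ C := LinearMap.mkContinuous_norm_le _ hCnn _
  have hSmem : S ∈ M := by
    rw [← SetLike.mem_coe, ← M.centralizer_centralizer]
    refine Set.mem_centralizer_iff.mpr fun z hz => ?_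
    have hzc : ∀ m ∈ M, m * z = z * m := fun m hm => Set.mem_centralizer_iff.mp hz m hm
    ext x
    apply ext_inner_right ℂ
    intro y
    have e1 : (inner ℂ ((z * S) x) y : ℂ) = inner ℂ (S x) ((ContinuousLinearMap.adjoint z) y) := by
      rw [ContinuousLinearMap.mul_apply]
      exact (ContinuousLinearMap.adjoint_inner_right z (S x) y).symm
    have e2 : Tendsto (fun t => (inner ℂ (T t x) ((ContinuousLinearMap.adjoint z) y) : ℂ)) (↑U)
        (𝓝 (φ (z x) y)) := by
      refine (hφ (z x) y).congr fun t => ?_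
      calc (inner ℂ (T t (z x)) y : ℂ) = inner ℂ ((T t * z) x) y := rfl
        _ = inner ℂ ((z * T t) x) y := by rw [hzc (T t) (hTmem t)]
        _ = inner ℂ (z (T t x)) y := rfl
        _ = inner ℂ (T t x) ((ContinuousLinearMap.adjoint z) y) :=
            (ContinuousLinearMap.adjoint_inner_right z (T t x) y).symm
    have e3 : φ x ((ContinuousLinearMap.adjoint z) y) = φ (z x) y :=
      tendsto_nhds_unique (hφ x _) e2
    rw [e1, hSapp, e3, ← hSapp]
    rfl
  exact ⟨S, hSmem, hSnorm, hWOT⟩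

lemma IsFNTState.tendsto_of_wot {M : VonNeumannAlgebra H} {ρ : (H →L[ℂ] H) →ₗ[ℂ] ℂ}
    (hρ : IsFNTState (M : Set (H →L[ℂ] H)) ρ) {ι : Type} (l : Filter ι)
    (T : ι → H →L[ℂ] H) (T' : H →L[ℂ] H) (C : ℝ)
    (hmem : ∀ t, T t ∈ M) (hnorm : ∀ t, ‖T t‖ ≤ C) (hmem' : T' ∈ M) (hnorm' : ‖T'‖ ≤ C)
    (hconv : WOTConv l T T') :
    Tendsto (fun t => ρ (T t)) l (𝓝 (ρ T')) := by
  set D : ℝ := max C 1 with hD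
  have hD1 : 0 < D := lt_of_lt_of_le one_pos (le_max_right _ _)
  set μ : ℂ := ((D⁻¹ : ℝ) : ℂ) with hμ
  have hsm : ∀ a : H →L[ℂ] H, a ∈ M → μ • a ∈ M := by
    intro a ha
    rw [Algebra.smul_def]
    exact mul_mem (M.algebraMap_mem μ) ha
  have hnm : ∀ a : H →L[ℂ] H, ‖a‖ ≤ C → ‖μ • a‖ ≤ 1 := by
    intro a ha
    rw [norm_smul]
    have hμn : ‖μ‖ = D⁻¹ := by
      rw [hμ, Complex.norm_real, Real.norm_eq_abs, abs_of_nonneg (inv_nonneg.mpr hD1.le)]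
    rw [hμn]
    calc D⁻¹ * ‖a‖ ≤ D⁻¹ * D :=
          mul_le_mul_of_nonneg_left (ha.trans (le_max_left _ _)) (inv_nonneg.mpr hD1.le)
      _ = 1 := inv_mul_cancel₀ hD1.ne'
  have hconv' : WOTConv l (fun t => μ • T t) (μ • T') := by
    intro x y
    have h := (hconv x y).const_mul (starRingEnd ℂ μ)
    simpa [inner_smul_left, mul_comm] using h
  have hmain := hρ.normal l (fun t => μ • T t) (μ • T') (fun t => hsm _ (hmem t))
    (fun t => hnm _ (hnorm t)) (hsm _ hmem') (hnm _ hnorm') hconv'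
  have hDμ : (D : ℂ) * μ = 1 := by
    rw [hμ, ← Complex.ofReal_mul, mul_inv_cancel₀ hD1.ne', Complex.ofReal_one]
  have key : ∀ a : H →L[ℂ] H, (D : ℂ) * ρ (μ • a) = ρ a := by
    intro a
    rw [map_smul, smul_eq_mul, ← mul_assoc, hDμ, one_mul]
  have h3 := hmain.const_mul (D : ℂ)
  simp only [key] at h3
  exact h3

lemma exists_sqrt_mem (M : VonNeumannAlgebra H) {e : H →L[ℂ] H} (he : e ∈ M)
    (hpos : e.IsPositive) : ∃ v : H →L[ℂ] H, v ∈ M ∧ star v * v = e := by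
  have hsa : IsSelfAdjoint e := hpos.isSelfAdjoint
  have hsr : SpectrumRestricts e ContinuousMap.realToNNReal := hpos.spectrumRestricts
  refine ⟨cfc Real.sqrt e, ?_, ?_⟩
  · have h1 : cfc Real.sqrt e = cfc (fun x : ℂ => (Real.sqrt x.re : ℂ)) e :=
      cfc_real_eq_complex Real.sqrt hsa
    rw [h1]
    have hsn : IsStarNormal e := hsa.isStarNormal
    have hcont : ContinuousOn (fun x : ℂ => (Real.sqrt x.re : ℂ)) (spectrum ℂ e) :=
      Continuous.continuousOn
        (Complex.continuous_ofReal.comp (Real.continuous_sqrt.comp Complex.continuous_re))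
    rw [cfc_apply (fun x : ℂ => (Real.sqrt x.re : ℂ)) e hsn hcont]
    rw [cfcHom_eq_of_isStarNormal]
    exact StarAlgebra.elemental.le_of_mem (vnClosed M) he (Subtype.mem _)
  · have hvsa : IsSelfAdjoint (cfc Real.sqrt e) := cfc_predicate Real.sqrt e
    rw [hvsa.star_eq]
    have h2 : cfc Real.sqrt e * cfc Real.sqrt e
        = cfc (fun x : ℝ => Real.sqrt x * Real.sqrt x) e := (cfc_mul _ _ e).symm
    rw [h2]
    conv_rhs => rw [← cfc_id ℝ e]
    apply cfc_congr
    intro x hx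
    have hxnn : 0 ≤ x := by
      rw [SpectrumRestricts.nnreal_iff] at hsr
      exact hsr x hx
    simp [Real.mul_self_sqrt hxnn]

lemma key_tendsto {M : VonNeumannAlgebra H} {ρ ρ' : (H →L[ℂ] H) →ₗ[ℂ] ℂ}
    (hρ : IsFNTState (M : Set (H →L[ℂ] H)) ρ) (hρ' : IsFNTState (M : Set (H →L[ℂ] H)) ρ')
    (U : Ultrafilter ℕ) (hU : (U : Filter ℕ) ≤ atTop)
    (c : ℕ → H →L[ℂ] H) (hcmem : ∀ m, c m ∈ M) (C : ℝ) (hcbd : ∀ m, ‖c m‖ ≤ C)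
    (h0 : Tendsto (fun m => ρ (star (c m) * c m)) atTop (𝓝 0)) :
    Tendsto (fun m => ρ' (star (c m) * c m)) (U : Filter ℕ) (𝓝 0) := by
  have hCnn : 0 ≤ C := le_trans (norm_nonneg _) (hcbd 0)
  set d : ℕ → H →L[ℂ] H := fun m => star (c m) * c m with hd
  have hdmem : ∀ m, d m ∈ M := fun m => mul_mem (star_mem (hcmem m)) (hcmem m)
  have hdbd : ∀ m, ‖d m‖ ≤ C * C := by
    intro m
    calc ‖d m‖ ≤ ‖star (c m)‖ * ‖c m‖ := norm_mul_le _ _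
      _ = ‖c m‖ * ‖c m‖ := by rw [norm_star]
      _ ≤ C * C := mul_le_mul (hcbd m) (hcbd m) (norm_nonneg _) hCnn
  have hdsa : ∀ m, star (d m) = d m := by
    intro m
    rw [hd]
    simp [star_mul]
  obtain ⟨e, hemem, hebd, heconv⟩ := exists_wot_ulim U M d (C * C) hdbd hdmem
  have h1 : Tendsto (fun m => ρ (d m)) (U : Filter ℕ) (𝓝 (ρ e)) :=
    hρ.tendsto_of_wot (↑U) d e (C * C) hdmem hdbd hemem hebd heconv
  have h2 : Tendsto (fun m => ρ (d m)) (U : Filter ℕ) (𝓝 0) := h0.mono_left hU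
  have hρe : ρ e = 0 := tendsto_nhds_unique h1 h2
  have hesa : IsSelfAdjoint e := by
    rw [isSelfAdjoint_iff]
    ext x
    apply ext_inner_right ℂ
    intro y
    rw [ContinuousLinearMap.star_eq_adjoint]
    have ha : (inner ℂ ((ContinuousLinearMap.adjoint e) x) y : ℂ) = inner ℂ x (e y) :=
      ContinuousLinearMap.adjoint_inner_left e y x
    rw [ha]
    have hstep : Tendsto (fun m => (inner ℂ (d m x) y : ℂ)) (U : Filter ℕ) (𝓝 (inner ℂ x (e y))) := by
      have hconj : Tendsto (fun m => (starRingEnd ℂ) (inner ℂ (d m y) x : ℂ)) (U : Filter ℕ)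
          (𝓝 ((starRingEnd ℂ) (inner ℂ (e y) x))) :=
        (Complex.continuous_conj.tendsto _).comp (heconv y x)
      rw [inner_conj_symm] at hconj
      refine hconj.congr fun m => ?_
      rw [inner_conj_symm]
      conv_rhs => rw [← hdsa m, ContinuousLinearMap.star_eq_adjoint]
      exact (ContinuousLinearMap.adjoint_inner_left (d m) y x).symm
    exact tendsto_nhds_unique hstep (heconv x y)
  have hepos : e.IsPositive := by
    refine ContinuousLinearMap.isPositive_def'.mpr ⟨hesa, fun x => ?_⟩
    have h3 : Tendsto (fun m => (inner ℂ (d m x) x : ℂ).re) (U : Filter ℕ)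
        (𝓝 (inner ℂ (e x) x : ℂ).re) := (Complex.continuous_re.tendsto _).comp (heconv x x)
    have h4 : 0 ≤ (inner ℂ (e x) x : ℂ).re := by
      refine ge_of_tendsto h3 (Filter.Eventually.of_forall fun m => ?_)
      have h5 : (inner ℂ (d m x) x : ℂ) = inner ℂ (c m x) (c m x) := by
        show (inner ℂ ((star (c m)) ((c m) x)) x : ℂ) = _
        rw [ContinuousLinearMap.star_eq_adjoint]
        exact ContinuousLinearMap.adjoint_inner_left (c m) x ((c m) x)
      rw [h5]
      exact inner_self_nonneg (𝕜 := ℂ) (x := (c m) x)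
    simpa [ContinuousLinearMap.reApplyInnerSelf, RCLike.re_to_complex] using h4
  obtain ⟨v, hvmem, hvv⟩ := exists_sqrt_mem M hemem hepos
  have hv0 : v = 0 := hρ.faithful v hvmem (by rw [hvv]; exact hρe)
  have he0 : e = 0 := by rw [← hvv, hv0]; simp
  have hfinal := hρ'.tendsto_of_wot (U : Filter ℕ) d e (C * C) hdmem hdbd hemem hebd heconv
  rw [he0] at hfinal
  simpa using hfinal

lemma gamma_mono {M : VonNeumannAlgebra H} {ρ ρ' : (H →L[ℂ] H) →ₗ[ℂ] ℂ}
    (hρ : IsFNTState (M : Set (H →L[ℂ] H)) ρ) (hρ' : IsFNTState (M : Set (H →L[ℂ] H)) ρ')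
    (h : PropertyGammaOn (M : Set (H →L[ℂ] H)) ρ) :
    PropertyGammaOn (M : Set (H →L[ℂ] H)) ρ' := by
  intro ε hε n hn k a ha
  by_contra hcon
  push_neg at hcon
  have hfam := fun m : ℕ => h (1 / (m + 1)) (by positivity) n hn k a ha
  choose p hp1 hp2 hp3 hp4 hp5 using hfam
  have hbad : ∀ m, ∃ i j, ε ≤ norm2 ρ' (p m i * a j - a j * p m i) :=
    fun m => hcon (p m) (hp1 m) (hp2 m) (hp3 m) (hp4 m)
  set U : Ultrafilter ℕ := Ultrafilter.of atTop with hUdef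
  have hUle : (U : Filter ℕ) ≤ atTop := Ultrafilter.of_le _
  have hkey : ∀ (i : Fin n) (j : Fin k),
      Tendsto (fun m => ρ' (star (p m i * a j - a j * p m i) * (p m i * a j - a j * p m i)))
        (U : Filter ℕ) (𝓝 0) := by
    intro i j
    set c : ℕ → H →L[ℂ] H := fun m => p m i * a j - a j * p m i with hc
    have hcmem : ∀ m, c m ∈ M := fun m =>
      sub_mem (mul_mem ((hp1 m i).1) (ha j)) (mul_mem (ha j) ((hp1 m i).1))
    have hcbd : ∀ m, ‖c m‖ ≤ 2 * ‖a j‖ := by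
      intro m
      have hpn : ‖p m i‖ ≤ 1 := proj_norm_le_one' (hp1 m i).2.1 (hp1 m i).2.2
      calc ‖c m‖ ≤ ‖p m i * a j‖ + ‖a j * p m i‖ := norm_sub_le _ _
        _ ≤ ‖p m i‖ * ‖a j‖ + ‖a j‖ * ‖p m i‖ := add_le_add (norm_mul_le _ _) (norm_mul_le _ _)
        _ ≤ 1 * ‖a j‖ + ‖a j‖ * 1 :=
            add_le_add (mul_le_mul_of_nonneg_right hpn (norm_nonneg _))
              (mul_le_mul_of_nonneg_left hpn (norm_nonneg _))
        _ = 2 * ‖a j‖ := by ring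
    have h0 : Tendsto (fun m => ρ (star (c m) * c m)) atTop (𝓝 0) := by
      have hre : ∀ m, ρ (star (c m) * c m) = (((ρ (star (c m) * c m)).re : ℝ) : ℂ) := by
        intro m
        have hnn := hρ.nonneg (c m) (hcmem m)
        rw [Complex.le_def] at hnn
        exact Complex.ext rfl (by simpa using hnn.2.symm)
      have hge : ∀ m, 0 ≤ (ρ (star (c m) * c m)).re := by
        intro m
        have hnn := hρ.nonneg (c m) (hcmem m)
        rw [Complex.le_def] at hnn
        simpa using hnn.1
      have hlt : ∀ m : ℕ, (ρ (star (c m) * c m)).re < (1 / ((m : ℝ) + 1)) ^ 2 := by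
        intro m
        have h5 := hp5 m i j
        rw [norm2] at h5
        exact (Real.sqrt_lt' (by positivity)).mp h5
      have hsq : Tendsto (fun m : ℕ => (1 / ((m : ℝ) + 1)) ^ 2) atTop (𝓝 0) := by
        have hbase := tendsto_one_div_add_atTop_nhds_zero_nat (𝕜 := ℝ)
        simpa using hbase.pow 2
      have hretend : Tendsto (fun m => (ρ (star (c m) * c m)).re) atTop (𝓝 0) :=
        tendsto_of_tendsto_of_tendsto_of_le_of_le tendsto_const_nhds hsq hge
          (fun m => (hlt m).le)
      have hcast := (Complex.continuous_ofReal.tendsto _).comp hretend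
      refine Tendsto.congr (fun m => (hre m).symm) ?_
      simpa [Function.comp_def] using hcast
    exact key_tendsto hρ hρ' U hUle c hcmem (2 * ‖a j‖) hcbd h0
  have hev : ∀ᶠ m in (U : Filter ℕ), ∀ (i : Fin n) (j : Fin k),
      (ρ' (star (p m i * a j - a j * p m i) * (p m i * a j - a j * p m i))).re < ε ^ 2 := by
    rw [Filter.eventually_all]
    intro i
    rw [Filter.eventually_all]
    intro j
    have hretend := (Complex.continuous_re.tendsto _).comp (hkey i j)
    have h0' : Tendsto
        (fun m => (ρ' (star (p m i * a j - a j * p m i) * (p m i * a j - a j * p m i))).re)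
        (U : Filter ℕ) (𝓝 0) := by simpa [Function.comp_def] using hretend
    exact h0'.eventually_lt_const (by positivity)
  obtain ⟨m, hm⟩ := hev.exists
  obtain ⟨i, j, hij⟩ := hbad m
  have hlt2 : norm2 ρ' (p m i * a j - a j * p m i) < ε := by
    rw [norm2]
    exact (Real.sqrt_lt' hε).mpr (hm i j)
  linarith

/-- Property Γ of a type II₁ von Neumann algebra does not depend on the
choice of faithful normal tracial state. -/
theorem statement2
    (M : VonNeumannAlgebra H) (hM : IsTypeII1 M)
    (ρ ρ' : (H →L[ℂ] H) →ₗ[ℂ] ℂ)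
    (hρ : IsFNTState (M : Set (H →L[ℂ] H)) ρ)
    (hρ' : IsFNTState (M : Set (H →L[ℂ] H)) ρ') :
    PropertyGammaOn (M : Set (H →L[ℂ] H)) ρ ↔ PropertyGammaOn (M : Set (H →L[ℂ] H)) ρ' :=
  ⟨gamma_mono hρ hρ', gamma_mono hρ' hρ⟩

end Paper
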